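/- Let g be a real Lie algebra with an abelian complex structure J and a J-invariant inner product satisfying the pluriclosed identity g([y,z],[w,x]) - g([x,z],[w,y]) + g([x,y],[w,z]) = 0 for all x,y,z,w. Then an element x ∈ g lies in the center of g if and only if [x,Jx] = 0. -/
import Mathlib


/-- With an abelian complex structure and a J-invariant pluriclosed
inner product, `x` is central iff `[x,Jx] = 0`. -/
theorem center_iff_bracket_Jx
    {L : Type*} [LieRing L] [LieAlgebra ℝ L]
    (J : L →ₗ[ℝ] L)
    (hJ2 : ∀ x : L, J (J x) = -x)
    (hab : ∀ x y : L, ⁅J x, J y⁆ = ⁅x, y⁆)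
    (g : L →ₗ[ℝ] L →ₗ[ℝ] ℝ)
    (hsymm : ∀ x y : L, g x y = g y x)
    (hpos : ∀ x : L, x ≠ 0 → 0 < g x x)
    (hJinv : ∀ x y : L, g (J x) (J y) = g x y)
    (hpc : ∀ x y z w : L, g ⁅y, z⁆ ⁅w, x⁆ - g ⁅x, z⁆ ⁅w, y⁆ + g ⁅x, y⁆ ⁅w, z⁆ = 0) :
    ∀ x : L, (∀ y : L, ⁅x, y⁆ = 0) ↔ ⁅x, J x⁆ = 0 := by
  intro x
  constructor
  · intro h; exact h (J x)
  · intro h y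
    have gnn : ∀ v : L, 0 ≤ g v v := by
      intro v
      rcases eq_or_ne v 0 with hv | hv
      · simp [hv]
      · exact (hpos v hv).le
    have hJb : ∀ a b : L, ⁅J a, b⁆ = -⁅a, J b⁆ := by
      intro a b
      have h1 := hab (J a) b
      rw [hJ2, neg_lie] at h1
      exact h1.symm
    have key := hpc x y (J x) (J y)
    have e1 : ⁅J y, x⁆ = -⁅y, J x⁆ := hJb y x
    have e2 : ⁅J y, J x⁆ = -⁅x, y⁆ := by
      rw [hab]; exact (lie_skew y x).symm ▸ rfl
    rw [h, e1, e2, map_zero] at key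
    simp only [map_neg, LinearMap.zero_apply] at key
    -- key : -(g ⁅y, Jx⁆ ⁅y, Jx⁆) - 0 + -(g ⁅x,y⁆ ⁅x,y⁆) = 0
    by_contra hne
    have h1 := hpos _ hne
    have h2 := gnn ⁅y, J x⁆
    linarith
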